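/- Let σ : [0,T]² × ℝ → ℝ admit a mixed derivative ∂²_{x,t} σ satisfying |∂²_{x,t}σ(t,s,x) - ∂²_{x,t}σ(t,s,y)| ≤ K_N|x-y|^δ for |x|,|y| ≤ N and |∂²_{x,t}σ(t,s₁,x) - ∂²_{x,t}σ(t,s₂,x)| ≤ K|s₁-s₂|^β, and |∂²_{x,t}σ| ≤ K_N on bounded sets. Then for all t₁, t₂, s₁, s₂ ∈ [0,T] and |x₁|,|x₂|,|x₃|,|x₄| ≤ N, |σ(t₁,s₁,x₁) - σ(t₁,s₁,x₂) - σ(t₂,s₁,x₁) + σ(t₂,s₁,x₂) - σ(t₁,s₂,x₃) + σ(t₁,s₂,x₄) + σ(t₂,s₂,x₃) - σ(t₂,s₂,x₄)| ≤ K_N|t₁-t₂||x₁-x₂-x₃+x₄| + K|x₁-x₂||t₁-t₂||s₁-s₂|^β + K_N|x₁-x₂||t₁-t₂|(|x₁-x₃|^δ + |x₂-x₄|^δ). -/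

import Mathlib

open Real Set

lemma aux_rpow_add_le (a b p : ℝ) (ha : 0 ≤ a) (hb : 0 ≤ b) (hp : 0 ≤ p) (hp1 : p ≤ 1) :
    (a + b) ^ p ≤ a ^ p + b ^ p := by
  lift a to NNReal using ha
  lift b to NNReal using hb
  have := NNReal.rpow_add_le_add_rpow a b hp hp1
  exact_mod_cast this

theorem stmt_12 (T N K KN β δ : ℝ) (hT : 0 < T) (hN : 0 < N) (hK : 0 ≤ K) (hKN : 0 ≤ KN)
    (hβ0 : 0 < β) (hβ1 : β ≤ 1) (hδ0 : 0 < δ) (hδ1 : δ ≤ 1)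
    (σ σx σxt : ℝ → ℝ → ℝ → ℝ)
    (hderivx : ∀ t s x : ℝ, HasDerivAt (fun y => σ t s y) (σx t s x) x)
    (hderivxt : ∀ t s x : ℝ, HasDerivAt (fun τ => σx τ s x) (σxt t s x) t)
    (hbound : ∀ t s x : ℝ, |x| ≤ N → |σxt t s x| ≤ KN)
    (hxHolder : ∀ t s x y : ℝ, |x| ≤ N → |y| ≤ N →
      |σxt t s x - σxt t s y| ≤ KN * |x - y| ^ δ)
    (hsHolder : ∀ t s₁ s₂ x : ℝ, |σxt t s₁ x - σxt t s₂ x| ≤ K * |s₁ - s₂| ^ β) :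
    ∀ t₁ ∈ Icc (0:ℝ) T, ∀ t₂ ∈ Icc (0:ℝ) T, ∀ s₁ ∈ Icc (0:ℝ) T, ∀ s₂ ∈ Icc (0:ℝ) T,
      ∀ x₁ x₂ x₃ x₄ : ℝ, |x₁| ≤ N → |x₂| ≤ N → |x₃| ≤ N → |x₄| ≤ N →
        |σ t₁ s₁ x₁ - σ t₁ s₁ x₂ - σ t₂ s₁ x₁ + σ t₂ s₁ x₂
            - σ t₁ s₂ x₃ + σ t₁ s₂ x₄ + σ t₂ s₂ x₃ - σ t₂ s₂ x₄|
          ≤ KN * |t₁ - t₂| * |x₁ - x₂ - x₃ + x₄|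
            + K * |x₁ - x₂| * |t₁ - t₂| * |s₁ - s₂| ^ β
            + KN * |x₁ - x₂| * |t₁ - t₂| * (|x₁ - x₃| ^ δ + |x₂ - x₄| ^ δ) := by
  intro t₁ _ t₂ _ s₁ _ s₂ _ x₁ x₂ x₃ x₄ h1 h2 h3 h4
  set C : ℝ := KN * |x₁ - x₂ - x₃ + x₄| + K * |x₁ - x₂| * |s₁ - s₂| ^ β
      + KN * |x₁ - x₂| * (|x₁ - x₃| ^ δ + |x₂ - x₄| ^ δ) with hCdef
  -- paths in x
  set y : ℝ → ℝ := fun u => x₂ + u * (x₁ - x₂) with hy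
  set z : ℝ → ℝ := fun u => x₄ + u * (x₃ - x₄) with hz
  have hyN : ∀ u ∈ Icc (0:ℝ) 1, |y u| ≤ N := by
    intro u hu
    have h : y u = (1 - u) * x₂ + u * x₁ := by simp [hy]; ring
    rw [h]
    calc |(1 - u) * x₂ + u * x₁| ≤ |(1 - u) * x₂| + |u * x₁| := abs_add_le _ _
      _ = (1 - u) * |x₂| + u * |x₁| := by
          rw [abs_mul, abs_mul, abs_of_nonneg (by linarith [hu.2]), abs_of_nonneg hu.1]
      _ ≤ (1 - u) * N + u * N := by
          have := hu.1; have := hu.2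
          gcongr <;> linarith
      _ = N := by ring
  have hzN : ∀ u ∈ Icc (0:ℝ) 1, |z u| ≤ N := by
    intro u hu
    have h : z u = (1 - u) * x₄ + u * x₃ := by simp [hz]; ring
    rw [h]
    calc |(1 - u) * x₄ + u * x₃| ≤ |(1 - u) * x₄| + |u * x₃| := abs_add_le _ _
      _ = (1 - u) * |x₄| + u * |x₃| := by
          rw [abs_mul, abs_mul, abs_of_nonneg (by linarith [hu.2]), abs_of_nonneg hu.1]
      _ ≤ (1 - u) * N + u * N := by
          have := hu.1; have := hu.2
          gcongr <;> linarith
      _ = N := by ring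
  have hyz : ∀ u ∈ Icc (0:ℝ) 1, |y u - z u| ^ δ ≤ |x₁ - x₃| ^ δ + |x₂ - x₄| ^ δ := by
    intro u hu
    have h : y u - z u = (1 - u) * (x₂ - x₄) + u * (x₁ - x₃) := by simp [hy, hz]; ring
    have hle : |y u - z u| ≤ |x₁ - x₃| + |x₂ - x₄| := by
      rw [h]
      calc |(1 - u) * (x₂ - x₄) + u * (x₁ - x₃)|
          ≤ |(1 - u) * (x₂ - x₄)| + |u * (x₁ - x₃)| := abs_add_le _ _
        _ = (1 - u) * |x₂ - x₄| + u * |x₁ - x₃| := by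
            rw [abs_mul, abs_mul, abs_of_nonneg (by linarith [hu.2]), abs_of_nonneg hu.1]
        _ ≤ |x₁ - x₃| + |x₂ - x₄| := by
            have := hu.1; have := hu.2
            nlinarith [abs_nonneg (x₂ - x₄), abs_nonneg (x₁ - x₃)]
    calc |y u - z u| ^ δ ≤ (|x₁ - x₃| + |x₂ - x₄|) ^ δ :=
          Real.rpow_le_rpow (abs_nonneg _) hle hδ0.le
      _ ≤ |x₁ - x₃| ^ δ + |x₂ - x₄| ^ δ :=
          aux_rpow_add_le _ _ _ (abs_nonneg _) (abs_nonneg _) hδ0.le hδ1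
  -- Step 1: for each u in [0,1], the difference in t of G_u is bounded
  have hG : ∀ u ∈ Icc (0:ℝ) 1,
      |((x₁ - x₂) * σx t₁ s₁ (y u) - (x₃ - x₄) * σx t₁ s₂ (z u))
        - ((x₁ - x₂) * σx t₂ s₁ (y u) - (x₃ - x₄) * σx t₂ s₂ (z u))| ≤ C * |t₁ - t₂| := by
    intro u hu
    have hderivG : ∀ τ : ℝ, HasDerivAt
        (fun τ => (x₁ - x₂) * σx τ s₁ (y u) - (x₃ - x₄) * σx τ s₂ (z u))
        ((x₁ - x₂) * σxt τ s₁ (y u) - (x₃ - x₄) * σxt τ s₂ (z u)) τ := fun τ =>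
      ((hderivxt τ s₁ (y u)).const_mul _).sub ((hderivxt τ s₂ (z u)).const_mul _)
    have hbd : ∀ τ : ℝ,
        |(x₁ - x₂) * σxt τ s₁ (y u) - (x₃ - x₄) * σxt τ s₂ (z u)| ≤ C := by
      intro τ
      have hsplit : (x₁ - x₂) * σxt τ s₁ (y u) - (x₃ - x₄) * σxt τ s₂ (z u)
          = (x₁ - x₂) * (σxt τ s₁ (y u) - σxt τ s₂ (y u))
            + (x₁ - x₂) * (σxt τ s₂ (y u) - σxt τ s₂ (z u))
            + (x₁ - x₂ - x₃ + x₄) * σxt τ s₂ (z u) := by ring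
      rw [hsplit]
      have e1 : |(x₁ - x₂) * (σxt τ s₁ (y u) - σxt τ s₂ (y u))|
          ≤ |x₁ - x₂| * (K * |s₁ - s₂| ^ β) := by
        rw [abs_mul]
        exact mul_le_mul_of_nonneg_left (hsHolder τ s₁ s₂ (y u)) (abs_nonneg _)
      have e2 : |(x₁ - x₂) * (σxt τ s₂ (y u) - σxt τ s₂ (z u))|
          ≤ |x₁ - x₂| * (KN * (|x₁ - x₃| ^ δ + |x₂ - x₄| ^ δ)) := by
        rw [abs_mul]
        refine mul_le_mul_of_nonneg_left ?_ (abs_nonneg _)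
        calc |σxt τ s₂ (y u) - σxt τ s₂ (z u)| ≤ KN * |y u - z u| ^ δ :=
              hxHolder τ s₂ (y u) (z u) (hyN u hu) (hzN u hu)
          _ ≤ KN * (|x₁ - x₃| ^ δ + |x₂ - x₄| ^ δ) :=
              mul_le_mul_of_nonneg_left (hyz u hu) hKN
      have e3 : |(x₁ - x₂ - x₃ + x₄) * σxt τ s₂ (z u)| ≤ |x₁ - x₂ - x₃ + x₄| * KN := by
        rw [abs_mul]
        exact mul_le_mul_of_nonneg_left (hbound τ s₂ (z u) (hzN u hu)) (abs_nonneg _)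
      calc |(x₁ - x₂) * (σxt τ s₁ (y u) - σxt τ s₂ (y u))
            + (x₁ - x₂) * (σxt τ s₂ (y u) - σxt τ s₂ (z u))
            + (x₁ - x₂ - x₃ + x₄) * σxt τ s₂ (z u)|
          ≤ |(x₁ - x₂) * (σxt τ s₁ (y u) - σxt τ s₂ (y u))
            + (x₁ - x₂) * (σxt τ s₂ (y u) - σxt τ s₂ (z u))|
            + |(x₁ - x₂ - x₃ + x₄) * σxt τ s₂ (z u)| := abs_add_le _ _
        _ ≤ |(x₁ - x₂) * (σxt τ s₁ (y u) - σxt τ s₂ (y u))|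
            + |(x₁ - x₂) * (σxt τ s₂ (y u) - σxt τ s₂ (z u))|
            + |(x₁ - x₂ - x₃ + x₄) * σxt τ s₂ (z u)| := by
            gcongr; exact abs_add_le _ _
        _ ≤ |x₁ - x₂| * (K * |s₁ - s₂| ^ β)
            + |x₁ - x₂| * (KN * (|x₁ - x₃| ^ δ + |x₂ - x₄| ^ δ))
            + |x₁ - x₂ - x₃ + x₄| * KN := add_le_add (add_le_add e1 e2) e3
        _ = C := by rw [hCdef]; ring
    have := (convex_univ (𝕜 := ℝ) (E := ℝ)).norm_image_sub_le_of_norm_hasDerivWithin_le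
      (f := fun τ => (x₁ - x₂) * σx τ s₁ (y u) - (x₃ - x₄) * σx τ s₂ (z u))
      (f' := fun τ => (x₁ - x₂) * σxt τ s₁ (y u) - (x₃ - x₄) * σxt τ s₂ (z u))
      (fun τ _ => (hderivG τ).hasDerivWithinAt) (fun τ _ => hbd τ)
      (mem_univ t₂) (mem_univ t₁)
    simpa [Real.norm_eq_abs, abs_sub_comm t₁ t₂, mul_comm] using this
  -- Step 2: MVT in u on [0,1]
  have hderivH : ∀ u ∈ Icc (0:ℝ) 1, HasDerivWithinAt
      (fun u => σ t₁ s₁ (y u) - σ t₂ s₁ (y u) - (σ t₁ s₂ (z u) - σ t₂ s₂ (z u)))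
      (((x₁ - x₂) * σx t₁ s₁ (y u) - (x₃ - x₄) * σx t₁ s₂ (z u))
        - ((x₁ - x₂) * σx t₂ s₁ (y u) - (x₃ - x₄) * σx t₂ s₂ (z u))) (Icc 0 1) u := by
    intro u _
    have hyd : HasDerivAt y (x₁ - x₂) u := by
      have h := ((hasDerivAt_id u).mul_const (x₁ - x₂)).const_add x₂
      rw [one_mul] at h
      exact h
    have hzd : HasDerivAt z (x₃ - x₄) u := by
      have h := ((hasDerivAt_id u).mul_const (x₃ - x₄)).const_add x₄
      rw [one_mul] at h
      exact h
    have d1 : HasDerivAt (fun u => σ t₁ s₁ (y u)) (σx t₁ s₁ (y u) * (x₁ - x₂)) u :=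
      (hderivx t₁ s₁ (y u)).comp u hyd
    have d2 : HasDerivAt (fun u => σ t₂ s₁ (y u)) (σx t₂ s₁ (y u) * (x₁ - x₂)) u :=
      (hderivx t₂ s₁ (y u)).comp u hyd
    have d3 : HasDerivAt (fun u => σ t₁ s₂ (z u)) (σx t₁ s₂ (z u) * (x₃ - x₄)) u :=
      (hderivx t₁ s₂ (z u)).comp u hzd
    have d4 : HasDerivAt (fun u => σ t₂ s₂ (z u)) (σx t₂ s₂ (z u) * (x₃ - x₄)) u :=
      (hderivx t₂ s₂ (z u)).comp u hzd
    have := ((d1.sub d2).sub (d3.sub d4)).hasDerivWithinAt (s := Icc (0:ℝ) 1)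
    exact this.congr_deriv (by ring)
  have hmain := (convex_Icc (0:ℝ) 1).norm_image_sub_le_of_norm_hasDerivWithin_le
      hderivH
      (fun u hu => by simpa [Real.norm_eq_abs] using hG u hu)
      (left_mem_Icc.2 zero_le_one) (right_mem_Icc.2 zero_le_one)
  have h01 : y 0 = x₂ ∧ y 1 = x₁ ∧ z 0 = x₄ ∧ z 1 = x₃ := by
    refine ⟨?_, ?_, ?_, ?_⟩ <;> simp [hy, hz]
  obtain ⟨e0, e1, e2, e3⟩ := h01
  rw [e0, e1, e2, e3] at hmain
  simp only [Real.norm_eq_abs] at hmain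
  calc |σ t₁ s₁ x₁ - σ t₁ s₁ x₂ - σ t₂ s₁ x₁ + σ t₂ s₁ x₂
            - σ t₁ s₂ x₃ + σ t₁ s₂ x₄ + σ t₂ s₂ x₃ - σ t₂ s₂ x₄|
      = |σ t₁ s₁ x₁ - σ t₂ s₁ x₁ - (σ t₁ s₂ x₃ - σ t₂ s₂ x₃)
          - (σ t₁ s₁ x₂ - σ t₂ s₁ x₂ - (σ t₁ s₂ x₄ - σ t₂ s₂ x₄))| := by ring_nf
    _ ≤ C * |t₁ - t₂| * |(1:ℝ) - 0| := hmain
    _ = KN * |t₁ - t₂| * |x₁ - x₂ - x₃ + x₄|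
        + K * |x₁ - x₂| * |t₁ - t₂| * |s₁ - s₂| ^ β
        + KN * |x₁ - x₂| * |t₁ - t₂| * (|x₁ - x₃| ^ δ + |x₂ - x₄| ^ δ) := by
        rw [hCdef]; simp; ring
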